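/- Relational equivalences are closed under dependent sums: given A, A' types with a relational equivalence R_A : A → A' → Type, and type families B : A → Type, B' : A' → Type with a family of relational equivalences R_B : ∀ a a', R_A a a' → (B a → B' a' → Type) (each R_B a a' r being a relational equivalence between B a and B' a'), the relation on Σ A B and Σ A' B' given by ((a,b),(a',b')) ↦ Σ (r : R_A a a'), R_B a a' r b b' is a relational equivalence. -/
import Mathlib


/-- A type is contractible if it has a point to which every point is equal. -/
def IsContrT (X : Type u) : Prop := ∃ c : X, ∀ y : X, y = c

/-- A relational equivalence between `X` and `Y`: a type-valued relation whose
total spaces in both directions are contractible. -/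
def IsRelEquiv {X : Type u} {Y : Type v} (R : X → Y → Type w) : Prop :=
  (∀ x : X, IsContrT (Σ y : Y, R x y)) ∧ (∀ y : Y, IsContrT (Σ x : X, R x y))

/-- Relational equivalences are closed under dependent sums: given a relational
equivalence `R_A` between `A` and `A'`, and a family of relational equivalences
`R_B a a' r` between `B a` and `B' a'` for each `r : R_A a a'`, the induced
relation on `Σ A B` and `Σ A' B'` is a relational equivalence. -/
theorem relEquiv_sigma {A : Type u} {A' : Type u'}
    (RA : A → A' → Type w) (hRA : IsRelEquiv RA)
    (B : A → Type v) (B' : A' → Type v')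
    (RB : ∀ (a : A) (a' : A'), RA a a' → (B a → B' a' → Type w'))
    (hRB : ∀ (a : A) (a' : A') (r : RA a a'), IsRelEquiv (RB a a' r)) :
    IsRelEquiv (fun (p : Σ a : A, B a) (p' : Σ a' : A', B' a') =>
      Σ r : RA p.1 p'.1, RB p.1 p'.1 r p.2 p'.2) := by
  constructor
  · rintro ⟨a, b⟩
    obtain ⟨⟨a₀, r₀⟩, hc⟩ := hRA.1 a
    obtain ⟨⟨b₀, s₀⟩, hc'⟩ := (hRB a a₀ r₀).1 b
    refine ⟨⟨⟨a₀, b₀⟩, r₀, s₀⟩, ?_⟩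
    rintro ⟨⟨a', b'⟩, r, s⟩
    have h1 := hc ⟨a', r⟩
    injection h1 with ha hr
    subst ha
    cases eq_of_heq hr
    have h2 := hc' ⟨b', s⟩
    injection h2 with hb hs
    subst hb
    cases eq_of_heq hs
    rfl
  · rintro ⟨a', b'⟩
    obtain ⟨⟨a₀, r₀⟩, hc⟩ := hRA.2 a'
    obtain ⟨⟨b₀, s₀⟩, hc'⟩ := (hRB a₀ a' r₀).2 b'
    refine ⟨⟨⟨a₀, b₀⟩, r₀, s₀⟩, ?_⟩
    rintro ⟨⟨a, b⟩, r, s⟩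
    have h1 := hc ⟨a, r⟩
    injection h1 with ha hr
    subst ha
    cases eq_of_heq hr
    have h2 := hc' ⟨b, s⟩
    injection h2 with hb hs
    subst hb
    cases eq_of_heq hs
    rfl
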